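/- For N ≥ 3 odd, k ∈ [1, N-1], and any X ∈ E_{N-2}: γ(ι_k(X) + {k,k+1}) = γ(X) and γ(ι_k(X)) = γ(X), where + denotes symmetric difference. -/
import Mathlib


def iota (k i : ℕ) : ℕ := if i < k then i else i + 2

def gam (X : Finset ℕ) : ℤ :=
  ((X.filter (fun x => x % 2 = 0)).card : ℤ) - ((X.filter (fun x => x % 2 = 1)).card : ℤ)

lemma iota_inj (k : ℕ) : Function.Injective (iota k) := by
  intro a b h
  unfold iota at h
  split_ifs at h <;> omega

lemma gam_image (k : ℕ) (X : Finset ℕ) : gam (X.image (iota k)) = gam X := by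
  unfold gam
  have h : ∀ r : ℕ, ((X.image (iota k)).filter (fun x => x % 2 = r)).card
      = (X.filter (fun x => x % 2 = r)).card := by
    intro r
    rw [Finset.filter_image, Finset.card_image_of_injective _ (iota_inj k)]
    congr 1
    apply Finset.filter_congr
    intro x _
    simp only [iota, Function.comp]
    split_ifs <;> omega
  rw [h 0, h 1]

lemma gam_union (s t : Finset ℕ) (h : Disjoint s t) : gam (s ∪ t) = gam s + gam t := by
  unfold gam
  rw [Finset.filter_union, Finset.filter_union,
    Finset.card_union_of_disjoint (Finset.disjoint_filter_filter h),
    Finset.card_union_of_disjoint (Finset.disjoint_filter_filter h)]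
  push_cast
  ring

lemma gam_pair (k : ℕ) : gam ({k, k + 1} : Finset ℕ) = 0 := by
  unfold gam
  have hne : k ∉ ({k + 1} : Finset ℕ) := by simp
  rcases Nat.even_or_odd k with hk | hk
  · have h0 : k % 2 = 0 := Nat.even_iff.mp hk
    have h1 : (k + 1) % 2 = 1 := by omega
    rw [Finset.filter_insert, Finset.filter_singleton]
    rw [Finset.filter_insert, Finset.filter_singleton]
    simp [h0, h1]
  · have h0 : k % 2 = 1 := Nat.odd_iff.mp hk
    have h1 : (k + 1) % 2 = 0 := by omega
    rw [Finset.filter_insert, Finset.filter_singleton]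
    rw [Finset.filter_insert, Finset.filter_singleton]
    simp [h0, h1]

/-- for odd `N ≥ 3`, `k ∈ [1,N-1]`, and any even-cardinality
`X ⊆ [1,N-2]`: `γ(ι_k(X) Δ {k,k+1}) = γ(X)` and `γ(ι_k(X)) = γ(X)`,
where `Δ` is symmetric difference and `ι_k(X)` is the image of `X`. -/
theorem stmt5 (N k : ℕ) (hN : Odd N) (hN3 : 3 ≤ N) (hk1 : 1 ≤ k) (hk2 : k ≤ N - 1)
    (X : Finset ℕ) (hX : X ⊆ Finset.Icc 1 (N - 2)) (hcard : Even X.card) :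
    gam (symmDiff (X.image (iota k)) ({k, k + 1} : Finset ℕ)) = gam X ∧
    gam (X.image (iota k)) = gam X := by
  have hdisj : Disjoint (X.image (iota k)) ({k, k + 1} : Finset ℕ) := by
    rw [Finset.disjoint_right]
    intro a ha ha'
    simp only [Finset.mem_insert, Finset.mem_singleton] at ha
    rcases Finset.mem_image.mp ha' with ⟨x, _, hx⟩
    simp only [iota] at hx
    split_ifs at hx <;> omega
  have hsd : symmDiff (X.image (iota k)) ({k, k + 1} : Finset ℕ)
      = X.image (iota k) ∪ ({k, k + 1} : Finset ℕ) := by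
    rw [hdisj.symmDiff_eq_sup]
    rfl
  refine ⟨?_, gam_image k X⟩
  rw [hsd, gam_union _ _ hdisj, gam_pair, add_zero, gam_image]
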